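/- If 0 < α < 1, the Markov chain with transition matrix P is ergodic (irreducible and aperiodic): there exists a positive integer t such that every entry of the matrix power P^t is strictly positive, i.e., (P^t)(e, e') > 0 for all states e, e' ∈ Ω. -/
import Mathlib


open Finset

namespace RWStmt

variable {V : Type*} [Fintype V] [DecidableEq V]

/-- Out-neighbors: `N_out(v) = {u : (v,u) ∈ E}`. -/
def Nout (E : Finset (V × V)) (v : V) : Finset V :=
  Finset.univ.filter fun u => (v, u) ∈ E

/-- In-neighbors: `N_in(v) = {u : (u,v) ∈ E}`. -/
def Nin (E : Finset (V × V)) (v : V) : Finset V :=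
  Finset.univ.filter fun u => (u, v) ∈ E

/-- Neighbors: `N(v) = N_out(v) ∪ N_in(v)`. -/
def Nbr (E : Finset (V × V)) (v : V) : Finset V :=
  Nout E v ∪ Nin E v

/-- Total degree: `d_sum(v) = d_out(v) + d_in(v)`. -/
def dsum (E : Finset (V × V)) (v : V) : ℕ :=
  (Nout E v).card + (Nin E v).card

/-- Edge multiplicity: `m(i,j) = 𝟙[j ∈ N_out(i)] + 𝟙[j ∈ N_in(i)]`. -/
def edgeMul (E : Finset (V × V)) (i j : V) : ℝ :=
  (if j ∈ Nout E i then 1 else 0) + (if j ∈ Nin E i then 1 else 0)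

/-- State space `Ω = {(i,j) : (i,j) ∈ E or (j,i) ∈ E or i = j}`. -/
def states (E : Finset (V × V)) : Finset (V × V) :=
  Finset.univ.filter fun p => p ∈ E ∨ (p.2, p.1) ∈ E ∨ p.1 = p.2

/-- The graph is weakly connected: any two vertices are joined by a path in the
symmetric closure of the edge relation. -/
def WeaklyConnected (E : Finset (V × V)) : Prop :=
  ∀ i j : V, Relation.ReflTransGen (fun a b => (a, b) ∈ E ∨ (b, a) ∈ E) i j

/-- Transition matrix of the proposed sampling algorithm:
`P((i,j),(l,k)) = α·m(i,k)/d_sum(i)` if `l = i`;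
`(1-α)·m(i,k)/d_sum(i)` if `l = k` and `l ∈ N(i)`; else `0`. -/
noncomputable def trans (E : Finset (V × V)) (α : ℝ) (e e' : V × V) : ℝ :=
  if e'.1 = e.1 then α * edgeMul E e.1 e'.2 / (dsum E e.1 : ℝ)
  else if e'.1 = e'.2 ∧ e'.1 ∈ Nbr E e.1 then
    (1 - α) * edgeMul E e.1 e'.2 / (dsum E e.1 : ℝ)
  else 0

/-- The stationary distribution:
`π(i,j) = α·m(i,j)/(2|E|)` for `i ≠ j`, and `π(i,i) = (1-α)·d_sum(i)/(2|E|)`. -/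
noncomputable def statDist (E : Finset (V × V)) (α : ℝ) (e : V × V) : ℝ :=
  if e.1 = e.2 then (1 - α) * (dsum E e.1 : ℝ) / (2 * (E.card : ℝ))
  else α * edgeMul E e.1 e.2 / (2 * (E.card : ℝ))

/-- `t`-step transition probabilities (matrix power of `P` over `Ω`). -/
noncomputable def transPow (E : Finset (V × V)) (α : ℝ) :
    ℕ → (V × V) → (V × V) → ℝ
  | 0, e, e' => if e = e' then 1 else 0
  | n + 1, e, e' => ∑ f ∈ states E, transPow E α n e f * trans E α f e'

section Aux

variable {E : Finset (V × V)} {α : ℝ}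

lemma mem_nbr_iff {i j : V} : j ∈ Nbr E i ↔ (i, j) ∈ E ∨ (j, i) ∈ E := by
  simp [Nbr, Nout, Nin]

lemma nbr_symm {i j : V} (h : j ∈ Nbr E i) : i ∈ Nbr E j := by
  rw [mem_nbr_iff] at h ⊢; tauto

lemma nbr_ne (hE : ∀ v : V, (v, v) ∉ E) {i j : V} (h : j ∈ Nbr E i) : j ≠ i := by
  rintro rfl
  rcases mem_nbr_iff.1 h with h | h <;> exact hE _ h

lemma edgeMul_nonneg (i j : V) : 0 ≤ edgeMul E i j := by
  unfold edgeMul; split_ifs <;> norm_num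

lemma edgeMul_pos {i j : V} (h : j ∈ Nbr E i) : 0 < edgeMul E i j := by
  unfold edgeMul
  rcases Finset.mem_union.1 h with h | h
  · rw [if_pos h]; split_ifs <;> norm_num
  · rw [if_pos h]; split_ifs <;> norm_num

lemma dsum_pos (hconn : WeaklyConnected E) (hcard : 2 ≤ Fintype.card V) (v : V) :
    0 < dsum E v := by
  obtain ⟨u, hu⟩ := Fintype.exists_ne_of_one_lt_card (by omega) v
  rcases (hconn v u).cases_head with h | ⟨w, hw, -⟩
  · exact absurd h.symm hu
  · have hw' : w ∈ Nbr E v := mem_nbr_iff.2 hw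
    unfold dsum
    rcases Finset.mem_union.1 hw' with h | h
    · have := Finset.card_pos.2 ⟨w, h⟩; omega
    · have := Finset.card_pos.2 ⟨w, h⟩; omega

lemma exists_nbr (hconn : WeaklyConnected E) (hcard : 2 ≤ Fintype.card V) (v : V) :
    ∃ w, w ∈ Nbr E v := by
  obtain ⟨u, hu⟩ := Fintype.exists_ne_of_one_lt_card (by omega) v
  rcases (hconn v u).cases_head with h | ⟨w, hw, -⟩
  · exact absurd h.symm hu
  · exact ⟨w, mem_nbr_iff.2 hw⟩

lemma mem_states_diag (v : V) : (v, v) ∈ states E := by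
  simp [states]

lemma mem_states_nbr {i j : V} (h : j ∈ Nbr E i) : (i, j) ∈ states E := by
  rw [mem_nbr_iff] at h
  simp only [states, Finset.mem_filter, Finset.mem_univ, true_and]
  tauto

lemma trans_nonneg (hα0 : 0 < α) (hα1 : α < 1) (e e' : V × V) :
    0 ≤ trans E α e e' := by
  unfold trans
  split_ifs
  · exact div_nonneg (mul_nonneg hα0.le (edgeMul_nonneg _ _)) (Nat.cast_nonneg _)
  · exact div_nonneg (mul_nonneg (by linarith) (edgeMul_nonneg _ _)) (Nat.cast_nonneg _)
  · exact le_rfl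

lemma trans_pos₁ (hα0 : 0 < α) (hd : ∀ v, 0 < dsum E v) {i j k : V}
    (h : k ∈ Nbr E i) : 0 < trans E α (i, j) (i, k) := by
  unfold trans
  split_ifs with h1 h2
  · exact div_pos (mul_pos hα0 (edgeMul_pos h)) (by exact_mod_cast hd i)
  · exact absurd rfl h1
  · exact absurd rfl h1

lemma trans_pos₂ (hα1 : α < 1) (hd : ∀ v, 0 < dsum E v) {i j k : V}
    (h : k ∈ Nbr E i) (hk : k ≠ i) : 0 < trans E α (i, j) (k, k) := by
  unfold trans
  split_ifs with h1 h2
  · exact absurd h1 hk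
  · exact div_pos (mul_pos (by linarith) (edgeMul_pos h)) (by exact_mod_cast hd i)
  · exact absurd ⟨rfl, h⟩ h2

lemma transPow_nonneg (hα0 : 0 < α) (hα1 : α < 1) :
    ∀ (n : ℕ) (e e' : V × V), 0 ≤ transPow E α n e e' := by
  intro n
  induction n with
  | zero => intro e e'; simp only [transPow]; split_ifs <;> norm_num
  | succ n ih =>
    intro e e'
    simp only [transPow]
    exact Finset.sum_nonneg fun f _ => mul_nonneg (ih e f) (trans_nonneg hα0 hα1 f e')

lemma step_pos (hα0 : 0 < α) (hα1 : α < 1) {n : ℕ} {e f e' : V × V}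
    (hf : f ∈ states E) (h1 : 0 < transPow E α n e f) (h2 : 0 < trans E α f e') :
    0 < transPow E α (n + 1) e e' := by
  have heq : transPow E α (n + 1) e e'
      = ∑ g ∈ states E, transPow E α n e g * trans E α g e' := rfl
  rw [heq]
  refine lt_of_lt_of_le (mul_pos h1 h2) ?_
  exact Finset.single_le_sum
    (fun g _ => mul_nonneg (transPow_nonneg hα0 hα1 n e g) (trans_nonneg hα0 hα1 g e')) hf

lemma transPow_add_pos (hα0 : 0 < α) (hα1 : α < 1) {n : ℕ} {e f : V × V}
    (hf : f ∈ states E) (h1 : 0 < transPow E α n e f) :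
    ∀ {m : ℕ} {g : V × V}, 0 < transPow E α m f g → 0 < transPow E α (n + m) e g := by
  intro m
  induction m with
  | zero =>
    intro g h2
    simp only [transPow] at h2
    split_ifs at h2 with h
    · subst h; exact h1
    · norm_num at h2
  | succ m ih =>
    intro g h2
    have heq : transPow E α (m + 1) f g
        = ∑ h ∈ states E, transPow E α m f h * trans E α h g := rfl
    rw [heq] at h2
    obtain ⟨h, hh, hpos⟩ : ∃ h ∈ states E, 0 < transPow E α m f h * trans E α h g := by
      by_contra hcon
      push_neg at hcon
      have : (∑ h ∈ states E, transPow E α m f h * trans E α h g) ≤ 0 :=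
        Finset.sum_nonpos fun x hx => hcon x hx
      linarith
    have ha := transPow_nonneg (E := E) hα0 hα1 m f h
    have hb := trans_nonneg (E := E) hα0 hα1 h g
    have hA : 0 < transPow E α m f h := by
      rcases ha.lt_or_eq with h' | h'
      · exact h'
      · rw [← h', zero_mul] at hpos; exact absurd hpos (lt_irrefl 0)
    have hB : 0 < trans E α h g := by
      rcases hb.lt_or_eq with h' | h'
      · exact h'
      · rw [← h', mul_zero] at hpos; exact absurd hpos (lt_irrefl 0)
    have := step_pos hα0 hα1 hh (ih hA) hB
    have hnm : n + (m + 1) = (n + m) + 1 := by omega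
    rw [hnm]
    exact this

lemma selfloop_pow (hα0 : 0 < α) (hα1 : α < 1) (hd : ∀ v, 0 < dsum E v)
    {i j : V} (h : j ∈ Nbr E i) (k : ℕ) : 0 < transPow E α k (i, j) (i, j) := by
  induction k with
  | zero => simp [transPow]
  | succ k ih => exact step_pos hα0 hα1 (mem_states_nbr h) ih (trans_pos₁ hα0 hd h)

lemma diag_return (hα0 : 0 < α) (hα1 : α < 1) (hd : ∀ v, 0 < dsum E v)
    (hE : ∀ v : V, (v, v) ∉ E) (hconn : WeaklyConnected E) (hcard : 2 ≤ Fintype.card V)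
    (v : V) : ∀ k, 2 ≤ k → 0 < transPow E α k (v, v) (v, v) := by
  obtain ⟨w, hw⟩ := exists_nbr hconn hcard v
  have hwv : w ≠ v := nbr_ne hE hw
  have t0 : 0 < transPow E α 0 (v, v) (v, v) := by simp [transPow]
  have c2 : 0 < transPow E α 2 (v, v) (v, v) := by
    have s1 : 0 < trans E α (v, v) (w, w) := trans_pos₂ hα1 hd hw hwv
    have s2 : 0 < trans E α (w, w) (v, v) :=
      trans_pos₂ hα1 hd (nbr_symm hw) (fun h => hwv h.symm)
    exact step_pos hα0 hα1 (mem_states_diag w) (step_pos hα0 hα1 (mem_states_diag v) t0 s1) s2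
  have c3 : 0 < transPow E α 3 (v, v) (v, v) := by
    have s1 : 0 < trans E α (v, v) (v, w) := trans_pos₁ hα0 hd hw
    have s2 : 0 < trans E α (v, w) (w, w) := trans_pos₂ hα1 hd hw hwv
    have s3 : 0 < trans E α (w, w) (v, v) :=
      trans_pos₂ hα1 hd (nbr_symm hw) (fun h => hwv h.symm)
    exact step_pos hα0 hα1 (mem_states_diag w)
      (step_pos hα0 hα1 (mem_states_nbr hw)
        (step_pos hα0 hα1 (mem_states_diag v) t0 s1) s2) s3
  intro k
  induction k using Nat.strong_induction_on with
  | _ k ih =>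
    intro hk
    match k, hk with
    | 2, _ => exact c2
    | 3, _ => exact c3
    | (m + 4), _ =>
      have h1 : 0 < transPow E α (m + 2) (v, v) (v, v) := ih (m + 2) (by omega) (by omega)
      have h2 := transPow_add_pos hα0 hα1 (mem_states_diag (E := E) v) h1 c2
      have : (m + 2) + 2 = m + 4 := by omega
      rwa [this] at h2

lemma reach_diag (hα1 : α < 1) (hd : ∀ v, 0 < dsum E v) (hα0 : 0 < α)
    (hE : ∀ v : V, (v, v) ∉ E) {v w : V}
    (h : Relation.ReflTransGen (fun a b => (a, b) ∈ E ∨ (b, a) ∈ E) v w) :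
    ∃ n, 0 < transPow E α n (v, v) (w, w) := by
  induction h with
  | refl => exact ⟨0, by simp [transPow]⟩
  | tail _ hbc ih =>
    obtain ⟨n, hn⟩ := ih
    have hc := mem_nbr_iff.2 hbc
    exact ⟨n + 1, step_pos hα0 hα1 (mem_states_diag _) hn
      (trans_pos₂ hα1 hd hc (nbr_ne hE hc))⟩

lemma reach (hα0 : 0 < α) (hα1 : α < 1) (hd : ∀ v, 0 < dsum E v)
    (hE : ∀ v : V, (v, v) ∉ E) (hconn : WeaklyConnected E)
    {e e' : V × V} (he : e ∈ states E) (he' : e' ∈ states E) :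
    ∃ n, 0 < transPow E α n e e' := by
  obtain ⟨i, j⟩ := e
  obtain ⟨k, l⟩ := e'
  have step1 : ∃ n, 0 < transPow E α n (i, j) (j, j) := by
    rcases eq_or_ne i j with h | h
    · subst h; exact ⟨0, by simp [transPow]⟩
    · have hj : j ∈ Nbr E i := by
        simp only [states, Finset.mem_filter, Finset.mem_univ, true_and] at he
        rcases he with h1 | h1 | h1
        · exact mem_nbr_iff.2 (Or.inl h1)
        · exact mem_nbr_iff.2 (Or.inr h1)
        · exact absurd h1 h
      have t0 : 0 < transPow E α 0 (i, j) (i, j) := by simp [transPow]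
      exact ⟨1, step_pos hα0 hα1 he t0 (trans_pos₂ hα1 hd hj (nbr_ne hE hj))⟩
  obtain ⟨n1, hn1⟩ := step1
  obtain ⟨n2, hn2⟩ := reach_diag hα1 hd hα0 hE (hconn j k)
  have h12 : 0 < transPow E α (n1 + n2) (i, j) (k, k) :=
    transPow_add_pos hα0 hα1 (mem_states_diag j) hn1 hn2
  rcases eq_or_ne k l with h | h
  · subst h; exact ⟨n1 + n2, h12⟩
  · have hl : l ∈ Nbr E k := by
      simp only [states, Finset.mem_filter, Finset.mem_univ, true_and] at he'
      rcases he' with h1 | h1 | h1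
      · exact mem_nbr_iff.2 (Or.inl h1)
      · exact mem_nbr_iff.2 (Or.inr h1)
      · exact absurd h1 h
    exact ⟨n1 + n2 + 1,
      step_pos hα0 hα1 (mem_states_diag k) h12 (trans_pos₁ hα0 hd hl)⟩

lemma eventual (hα0 : 0 < α) (hα1 : α < 1) (hd : ∀ v, 0 < dsum E v)
    (hE : ∀ v : V, (v, v) ∉ E) (hconn : WeaklyConnected E) (hcard : 2 ≤ Fintype.card V)
    {e e' : V × V} (he : e ∈ states E) (he' : e' ∈ states E) :
    ∃ n, ∀ m, n ≤ m → 0 < transPow E α m e e' := by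
  obtain ⟨n₀, hn₀⟩ := reach hα0 hα1 hd hE hconn he he'
  refine ⟨n₀ + 2, fun m hm => ?_⟩
  obtain ⟨kk, rfl, hk2⟩ : ∃ kk, m = n₀ + kk ∧ 2 ≤ kk := ⟨m - n₀, by omega, by omega⟩
  obtain ⟨k, l⟩ := e'
  rcases eq_or_ne k l with h | h
  · subst h
    exact transPow_add_pos hα0 hα1 he' hn₀
      (diag_return hα0 hα1 hd hE hconn hcard k kk hk2)
  · have hl : l ∈ Nbr E k := by
      simp only [states, Finset.mem_filter, Finset.mem_univ, true_and] at he'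
      rcases he' with h1 | h1 | h1
      · exact mem_nbr_iff.2 (Or.inl h1)
      · exact mem_nbr_iff.2 (Or.inr h1)
      · exact absurd h1 h
    exact transPow_add_pos hα0 hα1 he' hn₀ (selfloop_pow hα0 hα1 hd hl kk)

end Aux

/-- if `0 < α < 1`, the chain is ergodic: some positive power of
`P` has all entries strictly positive on `Ω × Ω`. -/
theorem stmt_8 (E : Finset (V × V)) (hE : ∀ v : V, (v, v) ∉ E)
    (hconn : WeaklyConnected E) (hcard : 2 ≤ Fintype.card V)
    (α : ℝ) (hα0 : 0 < α) (hα1 : α < 1) :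
    ∃ t : ℕ, 0 < t ∧ ∀ e ∈ states E, ∀ e' ∈ states E,
      0 < transPow E α t e e' := by
  have hd : ∀ v, 0 < dsum E v := dsum_pos hconn hcard
  have H : ∀ e e' : V × V, ∃ n : ℕ,
      e ∈ states E → e' ∈ states E → ∀ m, n ≤ m → 0 < transPow E α m e e' := by
    intro e e'
    by_cases he : e ∈ states E
    · by_cases he' : e' ∈ states E
      · obtain ⟨n, hn⟩ := eventual hα0 hα1 hd hE hconn hcard he he'
        exact ⟨n, fun _ _ => hn⟩
      · exact ⟨0, fun _ h => absurd h he'⟩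
    · exact ⟨0, fun h => absurd h he⟩
  choose f hf using H
  refine ⟨(states E ×ˢ states E).sup (fun p => f p.1 p.2) + 1, Nat.succ_pos _, ?_⟩
  intro e he e' he'
  refine hf e e' he he' _ ?_
  calc f e e' ≤ (states E ×ˢ states E).sup (fun p => f p.1 p.2) :=
        Finset.le_sup (f := fun p => f p.1 p.2)
          (show (e, e') ∈ states E ×ˢ states E from Finset.mem_product.2 ⟨he, he'⟩)
    _ ≤ _ := Nat.le_succ _

end RWStmt
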